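/- Let {W_n(x)} satisfy W_n = (a x + b)W_{n-1} + d·W_{n-2} with a > 0, b ≥ 0, d < 0, W_0 = 1, W_1 = x, and let R_n denote the set of real roots of W_n. Fix m ≥ 0 and reals α < β. Suppose W_m(α)W_{m+2}(α) > 0, W_m(β)W_{m+2}(β) > 0, that W_{m+1} has exactly m+1 distinct real roots, all lying in (α, β), and that R_{m+1} interlaces R_m. Then W_{m+2} has exactly m+2 distinct real roots, all lying in (α, β), and R_{m+2} interlaces R_{m+1}. -/

import Mathlib

open Polynomial

-- IVT for polynomials
private lemma pivt (p : Polynomial ℝ) (u v : ℝ) (huv : u < v)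
    (h : p.eval u * p.eval v < 0) : ∃ x ∈ Set.Ioo u v, p.eval x = 0 := by
  have hc : ContinuousOn (fun x => p.eval x) (Set.Icc u v) := p.continuous.continuousOn
  rcases mul_neg_iff.1 h with ⟨h1, h2⟩ | ⟨h1, h2⟩
  · obtain ⟨x, hx, hx0⟩ := intermediate_value_Ioo' huv.le hc (a := u) (b := v) ⟨h2, h1⟩
    exact ⟨x, hx, hx0⟩
  · obtain ⟨x, hx, hx0⟩ := intermediate_value_Ioo huv.le hc (a := u) (b := v) ⟨h1, h2⟩
    exact ⟨x, hx, hx0⟩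

-- sign of a product
private lemma sign_prod {ι : Type*} [DecidableEq ι] (s : Finset ι) (f : ι → ℝ)
    (h : ∀ i ∈ s, f i ≠ 0) :
    0 < (-1:ℝ)^((s.filter (fun i => f i < 0)).card) * ∏ i ∈ s, f i := by
  induction s using Finset.induction with
  | empty => simp
  | @insert a s hnotmem ih =>
    have ha := h a (Finset.mem_insert_self a s)
    have ih' := ih (fun i hi => h i (Finset.mem_insert_of_mem hi))
    rw [Finset.filter_insert, Finset.prod_insert hnotmem]
    by_cases hfa : f a < 0
    · rw [if_pos hfa, Finset.card_insert_of_notMem (by simp [hnotmem]), pow_succ]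
      nlinarith [ih']
    · have hfa' : 0 < f a := lt_of_le_of_ne (not_lt.1 hfa) (Ne.symm ha)
      rw [if_neg hfa]
      nlinarith [ih']

private lemma card_filter_ge (m k : ℕ) :
    ((Finset.univ : Finset (Fin m)).filter (fun i : Fin m => k ≤ (i : ℕ))).card = m - k := by
  induction m with
  | zero => simp
  | succ m ih =>
    rw [Fin.univ_castSuccEmb, Finset.filter_cons]
    have hmap : ((Finset.univ.map Fin.castSuccEmb).filter
        (fun i : Fin (m+1) => k ≤ (i : ℕ))).card = m - k := by
      rw [Finset.filter_map, Finset.card_map]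
      convert ih using 2
      ext i
      simp only [Finset.mem_filter, Finset.mem_univ, true_and, Function.comp_apply, Fin.coe_castAdd]
      rfl
    by_cases h : k ≤ m
    · rw [if_pos (by simpa using h), Finset.card_cons, hmap]
      omega
    · rw [if_neg (by simpa using h), hmap]
      omega

private lemma wdeg (a b d : ℝ) (ha : 0 < a) (W : ℕ → Polynomial ℝ)
    (hW0 : W 0 = 1) (hW1 : W 1 = X)
    (hrec : ∀ n, 2 ≤ n → W n = (C a * X + C b) * W (n - 1) + C d * W (n - 2)) :
    ∀ n, (W n).natDegree = n ∧ 0 < (W n).leadingCoeff := by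
  have key : ∀ n, ((W n).natDegree = n ∧ 0 < (W n).leadingCoeff) ∧
      ((W (n+1)).natDegree = n+1 ∧ 0 < (W (n+1)).leadingCoeff) := by
    intro n
    induction n with
    | zero =>
      refine ⟨⟨?_, ?_⟩, ?_, ?_⟩ <;> simp [hW0, hW1]
    | succ n ih =>
      refine ⟨ih.2, ?_⟩
      obtain ⟨⟨hdeg0, hlc0⟩, hdeg1, hlc1⟩ := ih
      have hWn1ne : W (n+1) ≠ 0 := leadingCoeff_ne_zero.1 (ne_of_gt hlc1)
      have hlin : (C a * X + C b).natDegree = 1 := natDegree_linear ha.ne'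
      have hlinlc : (C a * X + C b).leadingCoeff = a := leadingCoeff_linear ha.ne'
      have hlinne : (C a * X + C b) ≠ 0 := by
        intro h; rw [h] at hlin; simp at hlin
      set p := (C a * X + C b) * W (n+1) with hp
      set q := C d * W n with hq
      have hdegp : p.degree = (n + 2 : ℕ) := by
        rw [hp, degree_mul, degree_eq_natDegree hlinne, degree_eq_natDegree hWn1ne,
          hlin, hdeg1]
        norm_cast
        omega
      have hdegq : q.degree < ((n + 2 : ℕ) : WithBot ℕ) := by
        have h1 : q.degree ≤ (C d).degree + (W n).degree := degree_mul_le _ _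
        have h2 : (C d).degree + (W n).degree ≤ (0 : WithBot ℕ) + ((n : ℕ) : WithBot ℕ) :=
          add_le_add degree_C_le (by
            have h := Polynomial.degree_le_natDegree (p := W n)
            rwa [hdeg0] at h)
        have h3 : (0 : WithBot ℕ) + ((n : ℕ) : WithBot ℕ) < ((n + 2 : ℕ) : WithBot ℕ) := by
          rw [zero_add]
          exact_mod_cast (by omega : n < n + 2)
        exact lt_of_le_of_lt (h1.trans h2) h3
      have hW2 : W (n+2) = p + q := by
        have := hrec (n+2) (by omega)
        simpa using this
      have hdeg2 : (W (n+2)).degree = (n+2 : ℕ) := by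
        rw [hW2, degree_add_eq_left_of_degree_lt (by rw [hdegp]; exact hdegq), hdegp]
      have hlc2 : (W (n+2)).leadingCoeff = a * (W (n+1)).leadingCoeff := by
        rw [hW2, add_comm, leadingCoeff_add_of_degree_lt (by rw [hdegp]; exact hdegq),
          hp, leadingCoeff_mul, hlinlc]
      constructor
      · exact natDegree_eq_of_degree_eq_some hdeg2
      · rw [hlc2]; exact mul_pos ha hlc1
  exact fun n => (key n).1

private lemma roots_eq {m : ℕ} (p : Polynomial ℝ) (η : Fin m → ℝ)
    (hinj : Function.Injective η)
    (hdeg : p.natDegree = m) (hne : p ≠ 0)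
    (hroots : ∀ i, p.eval (η i) = 0) :
    p.roots = Multiset.map η Finset.univ.val := by
  set M : Multiset ℝ := Multiset.map η Finset.univ.val with hM
  have hnodup : M.Nodup := Multiset.Nodup.map hinj Finset.univ.nodup
  have hle : M ≤ p.roots := by
    refine (Multiset.le_iff_subset hnodup).2 ?_
    intro x hx
    obtain ⟨i, _, rfl⟩ := Multiset.mem_map.1 hx
    rw [mem_roots hne]
    exact hroots i
  have hcardM : Multiset.card M = m := by simp [hM]
  have hcardle : Multiset.card p.roots ≤ m := hdeg ▸ p.card_roots'
  exact (Multiset.eq_of_le_of_card_le hle (by omega)).symm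

private lemma factor_eval {m : ℕ} (p : Polynomial ℝ) (η : Fin m → ℝ)
    (hinj : Function.Injective η)
    (hdeg : p.natDegree = m) (hlc : 0 < p.leadingCoeff)
    (hroots : ∀ i, p.eval (η i) = 0) :
    ∀ x, p.eval x = p.leadingCoeff * ∏ i, (x - η i) := by
  have hpne : p ≠ 0 := leadingCoeff_ne_zero.1 hlc.ne'
  have heq := roots_eq p η hinj hdeg hpne hroots
  have hcard : Multiset.card p.roots = p.natDegree := by
    rw [heq, hdeg]; simp
  have hfac := C_leadingCoeff_mul_prod_multiset_X_sub_C hcard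
  intro x
  conv_lhs => rw [← hfac]
  rw [eval_mul, eval_C, heq, Multiset.map_map]
  congr 1
  rw [eval_multiset_prod, Multiset.map_map]
  simp [Finset.prod, Function.comp_def]

private lemma sgn_mul_neg (k l : ℕ) (hkl : k + 1 = l ∨ l + 1 = k) (u v : ℝ)
    (hu : 0 < (-1:ℝ)^k * u) (hv : 0 < (-1:ℝ)^l * v) : u * v < 0 := by
  have hodd : Odd (k + l) := by
    rcases hkl with h | h
    · exact ⟨k, by omega⟩
    · exact ⟨l, by omega⟩
  have hneg : ((-1:ℝ)^k) * ((-1:ℝ)^l) = -1 := by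
    rw [← pow_add]
    exact hodd.neg_one_pow
  nlinarith [mul_pos hu hv]

theorem stmt5 (a b d : ℝ) (ha : 0 < a) (hb : 0 ≤ b) (hd : d < 0)
    (W : ℕ → Polynomial ℝ)
    (hW0 : W 0 = 1) (hW1 : W 1 = X)
    (hrec : ∀ n, 2 ≤ n → W n = (C a * X + C b) * W (n - 1) + C d * W (n - 2))
    (m : ℕ) (α β : ℝ) (hαβ : α < β)
    (hWα : (W m).eval α * (W (m + 2)).eval α > 0)
    (hWβ : (W m).eval β * (W (m + 2)).eval β > 0)
    (ξ : Fin (m + 1) → ℝ) (η : Fin m → ℝ)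
    (hξmono : StrictMono ξ) (hηmono : StrictMono η)
    (hξroots : ∀ x : ℝ, (W (m + 1)).eval x = 0 ↔ ∃ i, x = ξ i)
    (hηroots : ∀ x : ℝ, (W m).eval x = 0 ↔ ∃ i, x = η i)
    (hξmem : ∀ i, ξ i ∈ Set.Ioo α β)
    (hitl : ∀ i : Fin m, ξ i.castSucc < η i ∧ η i < ξ i.succ) :
    ∃ ζ : Fin (m + 2) → ℝ, StrictMono ζ ∧
      (∀ x : ℝ, (W (m + 2)).eval x = 0 ↔ ∃ i, x = ζ i) ∧
      (∀ i, ζ i ∈ Set.Ioo α β) ∧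
      (∀ i : Fin (m + 1), ζ i.castSucc < ξ i ∧ ξ i < ζ i.succ) := by
  classical
  have hdeg := wdeg a b d ha W hW0 hW1 hrec
  obtain ⟨hdm, hlcm⟩ := hdeg m
  obtain ⟨hdm2, hlcm2⟩ := hdeg (m+2)
  set F := W (m+2) with hF
  have hFne : F ≠ 0 := leadingCoeff_ne_zero.1 hlcm2.ne'
  have hrec2 : F = (C a * X + C b) * W (m+1) + C d * W m := by
    have h := hrec (m+2) (by omega)
    simpa using h
  have hWmroot : ∀ i, (W m).eval (η i) = 0 := fun i => (hηroots (η i)).2 ⟨i, rfl⟩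
  have heval := factor_eval (W m) η hηmono.injective hdm hlcm hWmroot
  -- positions of η relative to ξ
  have hηξ : ∀ (j : Fin (m+1)) (i : Fin m),
      ((j:ℕ) ≤ (i:ℕ) → ξ j < η i) ∧ ((i:ℕ) < (j:ℕ) → η i < ξ j) := by
    intro j i
    constructor
    · intro h
      have h1 : ξ j ≤ ξ i.castSucc :=
        hξmono.monotone (by rw [Fin.le_def]; simpa using h)
      exact lt_of_le_of_lt h1 (hitl i).1
    · intro h
      have h1 : ξ i.succ ≤ ξ j :=
        hξmono.monotone (by rw [Fin.le_def]; simpa using h)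
      exact lt_of_lt_of_le (hitl i).2 h1
  -- sign of W m at the points ξ j
  have hsignWm : ∀ j : Fin (m+1), 0 < (-1:ℝ)^(m - (j:ℕ)) * (W m).eval (ξ j) := by
    intro j
    have hne : ∀ i ∈ (Finset.univ : Finset (Fin m)), ξ j - η i ≠ 0 := by
      intro i _
      rcases le_or_gt (j:ℕ) (i:ℕ) with h | h
      · have := (hηξ j i).1 h; intro hc; linarith
      · have := (hηξ j i).2 h; intro hc; linarith
    have key := sign_prod Finset.univ (fun i : Fin m => ξ j - η i) hne
    have hfilter : (Finset.univ.filter (fun i : Fin m => ξ j - η i < 0))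
        = Finset.univ.filter (fun i : Fin m => (j:ℕ) ≤ (i:ℕ)) := by
      apply Finset.filter_congr
      intro i _
      constructor
      · intro hlt
        by_contra hno
        push_neg at hno
        have := (hηξ j i).2 hno
        simp only [sub_neg] at hlt
        linarith
      · intro hle
        have := (hηξ j i).1 hle
        simpa [sub_neg] using this
    rw [hfilter, card_filter_ge] at key
    rw [heval (ξ j), show (-1:ℝ)^(m - (j:ℕ)) * ((W m).leadingCoeff * ∏ i, (ξ j - η i))
      = (W m).leadingCoeff * ((-1:ℝ)^(m - (j:ℕ)) * ∏ i, (ξ j - η i)) from by ring]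
    exact mul_pos hlcm key
  -- sign of W m at α and β
  have hηmem : ∀ i : Fin m, α < η i ∧ η i < β := by
    intro i
    exact ⟨lt_trans (hξmem i.castSucc).1 (hitl i).1,
      lt_trans (hitl i).2 (hξmem i.succ).2⟩
  have hsignWmα : 0 < (-1:ℝ)^m * (W m).eval α := by
    have hne : ∀ i ∈ (Finset.univ : Finset (Fin m)), α - η i ≠ 0 := by
      intro i _; have := (hηmem i).1; intro hc; linarith
    have key := sign_prod Finset.univ (fun i : Fin m => α - η i) hne
    have hfilter : (Finset.univ.filter (fun i : Fin m => α - η i < 0))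
        = (Finset.univ : Finset (Fin m)) := by
      apply Finset.filter_true_of_mem
      intro i _
      have := (hηmem i).1; linarith
    rw [hfilter] at key
    simp only [Finset.card_univ, Fintype.card_fin] at key
    rw [heval α, show (-1:ℝ)^m * ((W m).leadingCoeff * ∏ i, (α - η i))
      = (W m).leadingCoeff * ((-1:ℝ)^m * ∏ i, (α - η i)) from by ring]
    exact mul_pos hlcm key
  have hsignWmβ : 0 < (W m).eval β := by
    have hne : ∀ i ∈ (Finset.univ : Finset (Fin m)), β - η i ≠ 0 := by
      intro i _; have := (hηmem i).2; intro hc; linarith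
    have key := sign_prod Finset.univ (fun i : Fin m => β - η i) hne
    have hfilter : (Finset.univ.filter (fun i : Fin m => β - η i < 0))
        = (∅ : Finset (Fin m)) := by
      apply Finset.filter_false_of_mem
      intro i _
      have := (hηmem i).2; simp only [not_lt, sub_nonneg]; linarith
    rw [hfilter] at key
    simp only [Finset.card_empty, pow_zero, one_mul] at key
    rw [heval β]
    exact mul_pos hlcm key
  -- signs of F
  have hFξval : ∀ j : Fin (m+1), F.eval (ξ j) = d * (W m).eval (ξ j) := by
    intro j
    have hz : (W (m+1)).eval (ξ j) = 0 := (hξroots (ξ j)).2 ⟨j, rfl⟩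
    rw [hrec2]
    simp [hz]
  have hFξ : ∀ j : Fin (m+1), 0 < (-1:ℝ)^(m - (j:ℕ) + 1) * F.eval (ξ j) := by
    intro j
    rw [hFξval j, pow_succ]
    have := hsignWm j
    nlinarith
  have hWmαne : (W m).eval α ≠ 0 := by
    intro hc
    rw [hc] at hsignWmα; simp at hsignWmα
  have hFα : 0 < (-1:ℝ)^m * F.eval α := by
    have hw2 : 0 < ((W m).eval α)^2 := by positivity
    nlinarith [mul_pos hsignWmα hWα, hw2]
  have hFβ : 0 < F.eval β := by
    nlinarith [hsignWmβ, hWβ]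
  -- the intervals
  set lo : Fin (m+2) → ℝ := fun i =>
    if h : (i:ℕ) = 0 then α else ξ ⟨(i:ℕ)-1, by omega⟩ with hlo
  set hi : Fin (m+2) → ℝ := fun i =>
    if h : (i:ℕ) < m+1 then ξ ⟨(i:ℕ), h⟩ else β with hhi
  have hsign : ∀ i : Fin (m+2), lo i < hi i ∧ F.eval (lo i) * F.eval (hi i) < 0 := by
    intro i
    rcases Nat.eq_zero_or_pos (i:ℕ) with h0 | hpos
    · -- i = 0 : interval (α, ξ 0)
      have hlo0 : lo i = α := by simp only [hlo]; rw [dif_pos h0]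
      have hhi0 : hi i = ξ ⟨0, by omega⟩ := by simp [hhi, h0]
      refine ⟨?_, ?_⟩
      · rw [hlo0, hhi0]; exact (hξmem _).1
      · rw [hlo0, hhi0]
        refine sgn_mul_neg m (m - 0 + 1) (Or.inl (by omega)) _ _ hFα ?_
        simpa using hFξ ⟨0, by omega⟩
    · rcases lt_or_ge (i:ℕ) (m+1) with hlt | hge
      · -- middle: interval (ξ (i-1), ξ i)
        have hlov : lo i = ξ ⟨(i:ℕ)-1, by omega⟩ := by
          simp only [hlo]
          rw [dif_neg (by omega : ¬ (i:ℕ) = 0)]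
        have hhiv : hi i = ξ ⟨(i:ℕ), hlt⟩ := by simp only [hhi]; rw [dif_pos hlt]
        refine ⟨?_, ?_⟩
        · rw [hlov, hhiv]
          exact hξmono (by rw [Fin.lt_def]; show (i:ℕ) - 1 < (i:ℕ); omega)
        · rw [hlov, hhiv]
          refine sgn_mul_neg (m - ((i:ℕ)-1) + 1) (m - (i:ℕ) + 1) (Or.inr (by omega)) _ _ ?_ ?_
          · simpa using hFξ ⟨(i:ℕ)-1, by omega⟩
          · simpa using hFξ ⟨(i:ℕ), hlt⟩
      · -- last: interval (ξ m, β)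
        have him1 : (i:ℕ) = m+1 := by omega
        have hlov : lo i = ξ ⟨m, by omega⟩ := by
          simp only [hlo]; rw [dif_neg (by omega : ¬ (i:ℕ) = 0)]
          exact congrArg ξ (Fin.ext (show (i:ℕ) - 1 = m by omega))
        have hhiv : hi i = β := by simp [hhi, him1]
        refine ⟨?_, ?_⟩
        · rw [hlov, hhiv]; exact (hξmem _).2
        · rw [hlov, hhiv]
          refine sgn_mul_neg (m - m + 1) 0 (Or.inr (by omega)) _ _ ?_ (by simpa using hFβ)
          simpa using hFξ ⟨m, by omega⟩
  have hroot : ∀ i : Fin (m+2), ∃ x ∈ Set.Ioo (lo i) (hi i), F.eval x = 0 :=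
    fun i => pivt F _ _ (hsign i).1 (hsign i).2
  choose ζ hζmem hζroot using hroot
  -- key boundary identity: hi i.castSucc = lo i.succ = ξ i
  have hbound : ∀ i : Fin (m+1), hi i.castSucc = ξ i ∧ lo i.succ = ξ i := by
    intro i
    constructor
    · have h : ((i.castSucc : Fin (m+2)) : ℕ) < m + 1 := by simp; omega
      simp only [hhi, dif_pos h]
      exact congrArg ξ (Fin.ext (by simp))
    · have h : ¬ ((i.succ : Fin (m+2)) : ℕ) = 0 := by simp
      simp only [hlo, dif_neg h]
      exact congrArg ξ (Fin.ext (by simp))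
  have hζmono : StrictMono ζ := by
    rw [Fin.strictMono_iff_lt_succ]
    intro i
    have h1 : ζ i.castSucc < hi i.castSucc := (hζmem i.castSucc).2
    have h2 : lo i.succ < ζ i.succ := (hζmem i.succ).1
    rw [(hbound i).1] at h1
    rw [(hbound i).2] at h2
    exact lt_trans h1 h2
  have hζαβ : ∀ i, ζ i ∈ Set.Ioo α β := by
    intro i
    have h1 := (hζmem i).1
    have h2 := (hζmem i).2
    constructor
    · refine lt_of_le_of_lt ?_ h1
      by_cases h : (i:ℕ) = 0
      · simp only [hlo, dif_pos h, le_refl]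
      · simp only [hlo, dif_neg h]
        exact (hξmem _).1.le
    · refine lt_of_lt_of_le h2 ?_
      by_cases h : (i:ℕ) < m+1
      · simp only [hhi, dif_pos h]
        exact (hξmem _).2.le
      · simp only [hhi, dif_neg h, le_refl]
  have hζinj : Function.Injective ζ := hζmono.injective
  have hrootsF := roots_eq F ζ hζinj hdm2 hFne hζroot
  refine ⟨ζ, hζmono, ?_, hζαβ, ?_⟩
  · intro x
    constructor
    · intro hx
      have hxr : x ∈ F.roots := by rw [mem_roots hFne]; exact hx
      rw [hrootsF] at hxr
      obtain ⟨i, _, hi⟩ := Multiset.mem_map.1 hxr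
      exact ⟨i, hi.symm⟩
    · rintro ⟨i, rfl⟩
      exact hζroot i
  · intro i
    constructor
    · have h1 : ζ i.castSucc < hi i.castSucc := (hζmem i.castSucc).2
      rwa [(hbound i).1] at h1
    · have h2 : lo i.succ < ζ i.succ := (hζmem i.succ).1
      rwa [(hbound i).2] at h2
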